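/- Let (W,S) be a Coxeter system, ω a word in S, and u, w ∈ W_ω. If u ≤_ω w in the ω-sorting order, then u ≤_B w in Bruhat order. Moreover, on the full group of a finite Coxeter system with ω a reduced word for the longest element, both containments weak ⊆ sorting ⊆ Bruhat can be strict. -/

import Mathlib

namespace SortingPaper

variable {B : Type*} {M : CoxeterMatrix B} {W : Type*} [Group W]

/-- The subword of `ω` with index set `A` (0-based indices). -/
def subword (ω : List B) (A : Finset ℕ) : List B :=
  (A.sort (· ≤ ·)).filterMap (fun i => ω[i]?)

/-- Lexicographic comparison of index sets: `A ≤lex C` iff `A = C` or the minimum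
element of the symmetric difference belongs to `A`. -/
def lexLE (A C : Finset ℕ) : Prop :=
  A = C ∨ ∃ k, k ∈ A ∧ k ∉ C ∧ ∀ j < k, (j ∈ A ↔ j ∈ C)

/-- `A` is the index set of an ω-sorted word: the corresponding subword is reduced, and
`A` is lexicographically least among index sets of reduced subwords of `ω` with the
same product in `W`. -/
def IsSorted (cs : CoxeterSystem M W) (ω : List B) (A : Finset ℕ) : Prop :=
  A ⊆ Finset.range ω.length ∧ cs.IsReduced (subword ω A) ∧
  ∀ C ⊆ Finset.range ω.length, cs.IsReduced (subword ω C) →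
    cs.wordProd (subword ω C) = cs.wordProd (subword ω A) → lexLE A C

/-- The ω-sorting algorithm (auxiliary): scan the word, recording positions that are
left descents of the current element. -/
noncomputable def sortAux (cs : CoxeterSystem M W) : List B → ℕ → W → Finset ℕ
  | [], _, _ => ∅
  | s :: rest, i, x =>
    if cs.length (cs.simple s * x) < cs.length x then
      insert i (sortAux cs rest (i + 1) (cs.simple s * x))
    else sortAux cs rest (i + 1) x

/-- The index set produced by the ω-sorting algorithm applied to `u ∈ W`. -/
noncomputable def sortIdx (cs : CoxeterSystem M W) (ω : List B) (u : W) : Finset ℕ :=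
  sortAux cs ω 0 u

/-- Bruhat order: `u ≤_B w` iff some reduced word for `w` contains a reduced word
for `u` as a subword. -/
def bruhatLE (cs : CoxeterSystem M W) (u w : W) : Prop :=
  ∃ l : List B, cs.IsReduced l ∧ cs.wordProd l = w ∧
    ∃ l' : List B, l'.Sublist l ∧ cs.IsReduced l' ∧ cs.wordProd l' = u

/-- The ω-sorting order: `u ≤_ω w` iff the index set of the ω-sorted word of `u`
is contained in that of `w`. -/
def sortingLE (cs : CoxeterSystem M W) (ω : List B) (u w : W) : Prop :=
  ∃ A C : Finset ℕ, IsSorted cs ω A ∧ cs.wordProd (subword ω A) = u ∧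
    IsSorted cs ω C ∧ cs.wordProd (subword ω C) = w ∧ A ⊆ C

/-- Right weak order. -/
def weakLE (cs : CoxeterSystem M W) (u w : W) : Prop :=
  cs.length u + cs.length (u⁻¹ * w) = cs.length w

/-! ### Auxiliary lemmas -/

section Aux

open CoxeterSystem

lemma subword_sublist {B : Type*} (ω : List B) {A C : Finset ℕ} (h : A ⊆ C) :
    (subword ω A).Sublist (subword ω C) := by
  apply List.Sublist.filterMap
  refine List.sublist_of_subperm_of_pairwise ?_ (A.pairwise_sort _) (C.pairwise_sort _)
  refine (A.sort_nodup _).subperm ?_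
  intro x hx
  rw [Finset.mem_sort] at hx
  rw [Finset.mem_sort]
  exact h hx

lemma lexLE_antisymm {A C : Finset ℕ} (h1 : lexLE A C) (h2 : lexLE C A) : A = C := by
  rcases h1 with rfl | ⟨k, hkA, hkC, hk⟩
  · rfl
  rcases h2 with e | ⟨k', hk'C, hk'A, hk'⟩
  · exact e.symm
  rcases lt_trichotomy k k' with h | rfl | h
  · exact absurd ((hk' k h).mpr hkA) hkC
  · exact absurd hk'C hkC
  · exact absurd ((hk k' h).mpr hk'C) hk'A

lemma isSorted_unique {B : Type*} {M : CoxeterMatrix B} {W : Type*} [Group W]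
    (cs : CoxeterSystem M W) (ω : List B) {A C : Finset ℕ}
    (hA : IsSorted cs ω A) (hC : IsSorted cs ω C)
    (h : cs.wordProd (subword ω A) = cs.wordProd (subword ω C)) : A = C :=
  lexLE_antisymm (hA.2.2 C hC.1 hC.2.1 h.symm) (hC.2.2 A hA.1 hA.2.1 h)

end Aux

/-! ### The example: the symmetric group `S₃` as the Coxeter group `I₂(1) = A₂` -/

namespace Ex

open CoxeterSystem DihedralGroup

abbrev K : CoxeterMatrix (Fin 2) := CoxeterMatrix.I 1

abbrev W' : Type := K.Group

noncomputable def cs : CoxeterSystem K W' := K.toCoxeterSystem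

noncomputable abbrev a : W' := cs.simple 0
noncomputable abbrev b : W' := cs.simple 1

lemma aa : a * a = 1 := cs.simple_mul_simple_self 0
lemma bb : b * b = 1 := cs.simple_mul_simple_self 1
lemma ainv : a⁻¹ = a := inv_eq_of_mul_eq_one_right aa
lemma binv : b⁻¹ = b := inv_eq_of_mul_eq_one_right bb

lemma braid : a * b * a = b * a * b := by
  have h := cs.simple_mul_simple_pow 0 1
  rw [show K 0 1 = 3 from rfl] at h
  rw [pow_succ, pow_succ, pow_one] at h
  have h2 : (a * b * a) * (b * a * b) = 1 := by
    simp only [mul_assoc] at h ⊢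
    exact h
  have h3 : a * b * a = (b * a * b)⁻¹ := eq_inv_of_mul_eq_one_left h2
  rw [h3]
  simp [mul_inv_rev, ainv, binv, mul_assoc]

lemma hf : CoxeterMatrix.IsLiftable K ![sr 0, sr (1 : ZMod 3)] := by
  intro i i'; fin_cases i <;> fin_cases i' <;> decide

noncomputable def φ : W' →* DihedralGroup 3 := cs.lift ⟨![sr 0, sr 1], hf⟩

lemma φa : φ a = sr 0 := cs.lift_apply_simple hf 0
lemma φb : φ b = sr 1 := cs.lift_apply_simple hf 1

lemma neφ {x y : W'} (h : φ x ≠ φ y) : x ≠ y := fun e => h (congrArg φ e)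

/-! Products of short words. -/

lemma pnil : cs.wordProd ([] : List (Fin 2)) = 1 := cs.wordProd_nil

lemma p0 : cs.wordProd [0] = a := by
  rw [cs.wordProd_cons, cs.wordProd_nil, mul_one]

lemma p1 : cs.wordProd [1] = b := by
  rw [cs.wordProd_cons, cs.wordProd_nil, mul_one]

lemma p01 : cs.wordProd [0, 1] = a * b := by
  rw [cs.wordProd_cons, p1]

lemma p00 : cs.wordProd [0, 0] = 1 := by
  rw [cs.wordProd_cons, p0]; exact aa

lemma p10 : cs.wordProd [1, 0] = b * a := by
  rw [cs.wordProd_cons, p0]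

lemma p010 : cs.wordProd [0, 1, 0] = a * b * a := by
  rw [cs.wordProd_cons, p10, ← mul_assoc]

/-! Lengths. -/

lemma la : cs.length a = 1 := cs.length_simple 0
lemma lb : cs.length b = 1 := cs.length_simple 1

lemma lab : cs.length (a * b) = 2 := by
  have hle : cs.length (a * b) ≤ 2 := by
    have := cs.length_wordProd_le [0, 1]
    rwa [p01] at this
  have h0 : cs.length (a * b) ≠ 0 := by
    rw [Ne, cs.length_eq_zero_iff]
    exact neφ (by simp only [map_mul, map_one, φa, φb]; decide)
  have h1 : cs.length (a * b) ≠ 1 := by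
    rw [Ne, cs.length_eq_one_iff]
    rintro ⟨i, hi⟩
    fin_cases i
    · exact neφ (by simp only [Fin.mk_zero, Fin.mk_one, map_mul, φa, φb]; decide) hi
    · exact neφ (by simp only [Fin.mk_zero, Fin.mk_one, map_mul, φa, φb]; decide) hi
  omega

lemma lba : cs.length (b * a) = 2 := by
  have hle : cs.length (b * a) ≤ 2 := by
    have := cs.length_wordProd_le [1, 0]
    rwa [p10] at this
  have h0 : cs.length (b * a) ≠ 0 := by
    rw [Ne, cs.length_eq_zero_iff]
    exact neφ (by simp only [map_mul, map_one, φa, φb]; decide)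
  have h1 : cs.length (b * a) ≠ 1 := by
    rw [Ne, cs.length_eq_one_iff]
    rintro ⟨i, hi⟩
    fin_cases i
    · exact neφ (by simp only [Fin.mk_zero, Fin.mk_one, map_mul, φa, φb]; decide) hi
    · exact neφ (by simp only [Fin.mk_zero, Fin.mk_one, map_mul, φa, φb]; decide) hi
  omega

lemma laba : cs.length (a * b * a) = 3 := by
  have hle : cs.length (a * b * a) ≤ 3 := by
    have := cs.length_wordProd_le [0, 1, 0]
    rwa [p010] at this
  have hm : cs.length (a * b * a) % 2 = 1 := by
    have := cs.length_mul_mod_two (a * b) a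
    rw [lab, la] at this
    omega
  have h1 : cs.length (a * b * a) ≠ 1 := by
    rw [Ne, cs.length_eq_one_iff]
    rintro ⟨i, hi⟩
    fin_cases i
    · exact neφ (by simp only [Fin.mk_zero, Fin.mk_one, map_mul, φa, φb]; decide) hi
    · exact neφ (by simp only [Fin.mk_zero, Fin.mk_one, map_mul, φa, φb]; decide) hi
  omega

/-! Every element of `W'` is one of the six expected elements. -/

lemma mem_T (x : W') : x = 1 ∨ x = a ∨ x = b ∨ x = a * b ∨ x = b * a ∨ x = a * b * a := by
  obtain ⟨l, rfl⟩ := cs.wordProd_surjective x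
  induction l with
  | nil => exact Or.inl cs.wordProd_nil
  | cons i l ih =>
    rw [cs.wordProd_cons]
    fin_cases i
    · rcases ih with h | h | h | h | h | h <;> rw [h]
      · exact Or.inr (Or.inl (mul_one a))
      · exact Or.inl aa
      · exact Or.inr (Or.inr (Or.inr (Or.inl rfl)))
      · refine Or.inr (Or.inr (Or.inl ?_))
        show a * (a * b) = b
        rw [← mul_assoc, aa, one_mul]
      · refine Or.inr (Or.inr (Or.inr (Or.inr (Or.inr ?_))))
        show a * (b * a) = a * b * a
        rw [← mul_assoc]
      · refine Or.inr (Or.inr (Or.inr (Or.inr (Or.inl ?_))))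
        show a * (a * b * a) = b * a
        rw [← mul_assoc, ← mul_assoc, aa, one_mul]
    · rcases ih with h | h | h | h | h | h <;> rw [h]
      · exact Or.inr (Or.inr (Or.inl (mul_one b)))
      · exact Or.inr (Or.inr (Or.inr (Or.inr (Or.inl rfl))))
      · exact Or.inl bb
      · refine Or.inr (Or.inr (Or.inr (Or.inr (Or.inr ?_))))
        show b * (a * b) = a * b * a
        rw [braid, ← mul_assoc]
      · refine Or.inr (Or.inl ?_)
        show b * (b * a) = a
        rw [← mul_assoc, bb, one_mul]
      · refine Or.inr (Or.inr (Or.inr (Or.inl ?_)))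
        show b * (a * b * a) = a * b
        rw [braid, ← mul_assoc, ← mul_assoc, bb, one_mul]

lemma finW : Finite W' := by
  have hT : ({1, a, b, a * b, b * a, a * b * a} : Set W').Finite := by
    apply Set.Finite.insert
    apply Set.Finite.insert
    apply Set.Finite.insert
    apply Set.Finite.insert
    apply Set.Finite.insert
    exact Set.finite_singleton _
  refine Set.finite_univ_iff.mp (hT.subset ?_)
  intro x _
  simpa [Set.mem_insert_iff] using mem_T x

/-! Subwords of `ω = [0, 1, 0]`. -/

lemma subsets_range3 (C : Finset ℕ) (h : C ⊆ Finset.range 3) :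
    C = ∅ ∨ C = {0} ∨ C = {1} ∨ C = {2} ∨ C = {0, 1} ∨ C = {0, 2} ∨ C = {1, 2} ∨
      C = {0, 1, 2} := by
  have h' : C ∈ (Finset.range 3).powerset := Finset.mem_powerset.mpr h
  fin_cases h' <;> decide

lemma swE : subword ([0, 1, 0] : List (Fin 2)) ∅ = [] := by
  rw [subword, Finset.sort_empty]; rfl

lemma sw0 : subword ([0, 1, 0] : List (Fin 2)) {0} = [0] := by
  rw [subword, Finset.sort_singleton]; rfl

lemma sw1 : subword ([0, 1, 0] : List (Fin 2)) {1} = [1] := by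
  rw [subword, Finset.sort_singleton]; rfl

lemma sw2 : subword ([0, 1, 0] : List (Fin 2)) {2} = [0] := by
  rw [subword, Finset.sort_singleton]; rfl

lemma sw01 : subword ([0, 1, 0] : List (Fin 2)) {0, 1} = [0, 1] := by
  rw [subword, Finset.sort_insert (· ≤ ·) (by decide) (by decide), Finset.sort_singleton]; rfl

lemma sw02 : subword ([0, 1, 0] : List (Fin 2)) {0, 2} = [0, 0] := by
  rw [subword, Finset.sort_insert (· ≤ ·) (by decide) (by decide), Finset.sort_singleton]; rfl

lemma sw12 : subword ([0, 1, 0] : List (Fin 2)) {1, 2} = [1, 0] := by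
  rw [subword, Finset.sort_insert (· ≤ ·) (by decide) (by decide), Finset.sort_singleton]; rfl

lemma sw012 : subword ([0, 1, 0] : List (Fin 2)) {0, 1, 2} = [0, 1, 0] := by
  rw [subword, Finset.sort_insert (· ≤ ·) (by decide) (by decide),
    Finset.sort_insert (· ≤ ·) (by decide) (by decide), Finset.sort_singleton]; rfl

/-! The four sorted index sets we need. -/

lemma sorted0 : IsSorted cs [0, 1, 0] {0} := by
  refine ⟨by decide, ?_, ?_⟩
  · rw [sw0, CoxeterSystem.IsReduced, p0, la]; rfl
  · intro C hC hred hprod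
    rcases subsets_range3 C hC with rfl | rfl | rfl | rfl | rfl | rfl | rfl | rfl <;>
      simp only [swE, sw0, sw1, sw2, sw01, sw02, sw12, sw012, pnil, p0, p1, p01, p00, p10,
        p010] at hred hprod <;>
      first
        | exact Or.inl rfl
        | exact absurd hprod (neφ (by simp only [map_mul, map_one, φa, φb]; decide))
        | (refine Or.inr ⟨0, ?_, ?_, fun j hj => absurd hj (by omega)⟩ <;> decide)

lemma sorted1 : IsSorted cs [0, 1, 0] {1} := by
  refine ⟨by decide, ?_, ?_⟩
  · rw [sw1, CoxeterSystem.IsReduced, p1, lb]; rfl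
  · intro C hC hred hprod
    rcases subsets_range3 C hC with rfl | rfl | rfl | rfl | rfl | rfl | rfl | rfl <;>
      simp only [swE, sw0, sw1, sw2, sw01, sw02, sw12, sw012, pnil, p0, p1, p01, p00, p10,
        p010] at hred hprod <;>
      first
        | exact Or.inl rfl
        | exact absurd hprod (neφ (by simp only [map_mul, map_one, φa, φb]; decide))

lemma sorted01 : IsSorted cs [0, 1, 0] {0, 1} := by
  refine ⟨by decide, ?_, ?_⟩
  · rw [sw01, CoxeterSystem.IsReduced, p01, lab]; rfl
  · intro C hC hred hprod
    rcases subsets_range3 C hC with rfl | rfl | rfl | rfl | rfl | rfl | rfl | rfl <;>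
      simp only [swE, sw0, sw1, sw2, sw01, sw02, sw12, sw012, pnil, p0, p1, p01, p00, p10,
        p010] at hred hprod <;>
      first
        | exact Or.inl rfl
        | exact absurd hprod (neφ (by simp only [map_mul, map_one, φa, φb]; decide))

lemma sorted12 : IsSorted cs [0, 1, 0] {1, 2} := by
  refine ⟨by decide, ?_, ?_⟩
  · rw [sw12, CoxeterSystem.IsReduced, p10, lba]; rfl
  · intro C hC hred hprod
    rcases subsets_range3 C hC with rfl | rfl | rfl | rfl | rfl | rfl | rfl | rfl <;>
      simp only [swE, sw0, sw1, sw2, sw01, sw02, sw12, sw012, pnil, p0, p1, p01, p00, p10,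
        p010] at hred hprod <;>
      first
        | exact Or.inl rfl
        | exact absurd hprod (neφ (by simp only [map_mul, map_one, φa, φb]; decide))

end Ex
/-- the ω-sorting order is extended by Bruhat order; moreover on a
finite Coxeter group with `ω` a reduced word for the longest element, both
containments weak ⊆ sorting ⊆ Bruhat can be strict. -/
theorem sorting_le_implies_bruhat_le :
    (∀ {B : Type} (M : CoxeterMatrix B) {W : Type} [Group W] (cs : CoxeterSystem M W)
      (ω : List B) (u w : W), sortingLE cs ω u w → bruhatLE cs u w) ∧
    (∃ (B : Type) (M : CoxeterMatrix B) (W : Type) (instW : Group W)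
      (cs : @CoxeterSystem B M W instW) (ω : List B),
      Finite W ∧ cs.IsReduced ω ∧
      (∀ v : W, cs.length v ≤ cs.length (cs.wordProd ω)) ∧
      (∃ u w : W, @sortingLE B M W instW cs ω u w ∧ ¬ @weakLE B M W instW cs u w) ∧
      (∃ u w : W, @bruhatLE B M W instW cs u w ∧ ¬ @sortingLE B M W instW cs ω u w)) := by
  constructor
  · intro B M W _ cs ω u w h
    obtain ⟨A, C, hA, hAu, hC, hCw, hAC⟩ := h
    exact ⟨subword ω C, hC.2.1, hCw, subword ω A, subword_sublist ω hAC, hA.2.1, hAu⟩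
  · refine ⟨Fin 2, Ex.K, Ex.W', inferInstance, Ex.cs, [0, 1, 0], Ex.finW, ?_, ?_, ?_, ?_⟩
    · unfold CoxeterSystem.IsReduced
      rw [Ex.p010, Ex.laba]
      rfl
    · intro v
      rw [Ex.p010, Ex.laba]
      rcases Ex.mem_T v with rfl | rfl | rfl | rfl | rfl | rfl
      · rw [Ex.cs.length_one]; omega
      · rw [Ex.la]; omega
      · rw [Ex.lb]; omega
      · rw [Ex.lab]; omega
      · rw [Ex.lba]; omega
      · rw [Ex.laba]
    · refine ⟨Ex.b, Ex.a * Ex.b,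
        ⟨{1}, {0, 1}, Ex.sorted1, by rw [Ex.sw1, Ex.p1], Ex.sorted01,
          by rw [Ex.sw01, Ex.p01], by decide⟩, ?_⟩
      intro h
      unfold weakLE at h
      rw [Ex.binv] at h
      have e : Ex.b * (Ex.a * Ex.b) = Ex.a * Ex.b * Ex.a := by
        rw [Ex.braid, ← mul_assoc]
      rw [e, Ex.lb, Ex.laba, Ex.lab] at h
      omega
    · refine ⟨Ex.a, Ex.b * Ex.a, ⟨[1, 0], ?_, Ex.p10, [0], ?_, ?_, Ex.p0⟩, ?_⟩
      · unfold CoxeterSystem.IsReduced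
        rw [Ex.p10, Ex.lba]
        rfl
      · exact (List.Sublist.refl [0]).cons 1
      · unfold CoxeterSystem.IsReduced
        rw [Ex.p0, Ex.la]
        rfl
      · rintro ⟨A, C, hA, hAu, hC, hCw, hsub⟩
        have eA : A = {0} :=
          isSorted_unique Ex.cs [0, 1, 0] hA Ex.sorted0 (by rw [hAu, Ex.sw0, Ex.p0])
        have eC : C = {1, 2} :=
          isSorted_unique Ex.cs [0, 1, 0] hC Ex.sorted12 (by rw [hCw, Ex.sw12, Ex.p10])
        subst eA
        subst eC
        exact absurd (hsub (Finset.mem_singleton_self 0)) (by decide)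

end SortingPaper
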